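/- arXiv:1711.05224 — 5 statements merged into one kernel-verified Lean document; each statement's English description precedes it below -/
import Mathlib

section
/- For the gradient flow ẋ = -x₁, ẋ₂ = x₂ (i.e., ẋ = -Ax with A = diag(1,-1)) and any 0 < ε < r, any solution starting on the boundary of the ball B_r(0) that at some later time enters the ball B_ε(0) must spend at least time log(r/ε) inside B_r(0) before entering B_ε(0). -/
open MeasureTheory

set_option maxHeartbeats 1000000 in
/-- For the linear gradient flow `ẋ = -Ax`, `A = diag(1,-1)`, with solution
`x(t) = (x₁(0)e^{-t}, x₂(0)e^{t})` starting on `∂B_r(0)` and entering `B_ε(0)`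
at time `t₁ > 0` (`0 < ε < r`), the time spent inside `B_r(0)` before entering
`B_ε(0)` is at least `log(r/ε)`. -/
theorem stmt_11 (r ε : ℝ) (hε : 0 < ε) (hεr : ε < r)
    (x : ℝ → EuclideanSpace ℝ (Fin 2))
    (hx : ∀ t : ℝ, x t = (WithLp.equiv 2 (Fin 2 → ℝ)).symm
      ![x 0 0 * Real.exp (-t), x 0 1 * Real.exp t])
    (hstart : ‖x 0‖ = r)
    (t₁ : ℝ) (ht₁ : 0 < t₁) (henter : ‖x t₁‖ < ε) :
    ENNReal.ofReal (Real.log (r / ε)) ≤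
      volume {t ∈ Set.Icc (0:ℝ) t₁ | ‖x t‖ < r} := by
  set a := x 0 0 with ha
  set b := x 0 1 with hb
  have hr : (0:ℝ) < r := hε.trans hεr
  have hnorm : ∀ t : ℝ, ‖x t‖ ^ 2 = a ^ 2 * Real.exp (-t) ^ 2 + b ^ 2 * Real.exp t ^ 2 := by
    intro t
    rw [hx t, EuclideanSpace.norm_eq]
    rw [Real.sq_sqrt (by positivity)]
    simp [Fin.sum_univ_two, WithLp.equiv_symm_apply, PiLp.toLp_apply, sq_abs]
    ring
  have hab : a ^ 2 + b ^ 2 = r ^ 2 := by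
    have := hnorm 0
    rw [hstart] at this
    simp at this
    linarith
  have hg1 : a ^ 2 * Real.exp (-t₁) ^ 2 + b ^ 2 * Real.exp t₁ ^ 2 < ε ^ 2 := by
    rw [← hnorm t₁]
    exact pow_lt_pow_left₀ henter (norm_nonneg _) (by norm_num)
  have hee : Real.exp (-t₁) * Real.exp t₁ = 1 := by
    rw [← Real.exp_add]; simp
  have hexp1 : (1:ℝ) ≤ Real.exp t₁ := Real.one_le_exp ht₁.le
  -- r * exp (-t₁) < ε
  have hkey : r * Real.exp (-t₁) < ε := by
    have h1 : Real.exp (-t₁) ≤ Real.exp t₁ := by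
      nlinarith [Real.exp_pos (-t₁)]
    have hb2 : b ^ 2 * Real.exp (-t₁) ^ 2 ≤ b ^ 2 * Real.exp t₁ ^ 2 := by
      have h3 : Real.exp (-t₁) ^ 2 ≤ Real.exp t₁ ^ 2 := by
        gcongr
      exact mul_le_mul_of_nonneg_left h3 (sq_nonneg b)
    have h2 : (r * Real.exp (-t₁)) ^ 2 < ε ^ 2 := by nlinarith
    exact lt_of_pow_lt_pow_left₀ 2 hε.le h2
  have hlog : Real.log (r / ε) ≤ t₁ := by
    have hrε : r / ε < Real.exp t₁ := by
      rw [div_lt_iff₀ hε]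
      calc r = r * (Real.exp (-t₁) * Real.exp t₁) := by rw [hee]; ring
        _ = (r * Real.exp (-t₁)) * Real.exp t₁ := by ring
        _ < ε * Real.exp t₁ := by
            exact mul_lt_mul_of_pos_right hkey (Real.exp_pos _)
        _ = Real.exp t₁ * ε := by ring
    exact ((Real.log_lt_iff_lt_exp (by positivity)).mpr hrε).le
  -- the set contains Ioc 0 t₁
  have hsub : Set.Ioc (0:ℝ) t₁ ⊆ {t ∈ Set.Icc (0:ℝ) t₁ | ‖x t‖ < r} := by
    intro t ht
    obtain ⟨ht0, htt1⟩ := ht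
    refine ⟨⟨ht0.le, htt1⟩, ?_⟩
    have hs0 : 0 < t / t₁ := div_pos ht0 ht₁
    have hs1 : t / t₁ ≤ 1 := (div_le_one ht₁).mpr htt1
    set s := t / t₁ with hs
    have hst : s * t₁ = t := by rw [hs]; exact div_mul_cancel₀ t ht₁.ne'
    have sq_exp : ∀ u : ℝ, Real.exp u ^ 2 = Real.exp (2 * u) := by
      intro u; rw [sq, ← Real.exp_add]; ring_nf
    have e1 : Real.exp (-(2 * t)) ≤ (1 - s) * 1 + s * Real.exp (-(2 * t₁)) := by
      have := convexOn_exp.2 (Set.mem_univ (0:ℝ)) (Set.mem_univ (-(2 * t₁)))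
        (by linarith : (0:ℝ) ≤ 1 - s) hs0.le (by ring)
      have harg : (1 - s) • (0:ℝ) + s • (-(2 * t₁)) = -(2 * t) := by
        simp [smul_eq_mul]; nlinarith [hst]
      rw [harg] at this
      simpa [smul_eq_mul] using this
    have e2 : Real.exp (2 * t) ≤ (1 - s) * 1 + s * Real.exp (2 * t₁) := by
      have := convexOn_exp.2 (Set.mem_univ (0:ℝ)) (Set.mem_univ (2 * t₁))
        (by linarith : (0:ℝ) ≤ 1 - s) hs0.le (by ring)
      have harg : (1 - s) • (0:ℝ) + s • (2 * t₁) = 2 * t := by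
        simp [smul_eq_mul]; nlinarith [hst]
      rw [harg] at this
      simpa [smul_eq_mul] using this
    have hlt : ‖x t‖ ^ 2 < r ^ 2 := by
      rw [hnorm t, sq_exp, sq_exp, show (2:ℝ) * -t = -(2 * t) by ring]

      have p1 : a ^ 2 * Real.exp (-(2 * t)) ≤ a ^ 2 * ((1 - s) * 1 + s * Real.exp (-(2 * t₁))) :=
        mul_le_mul_of_nonneg_left e1 (sq_nonneg a)
      have p2 : b ^ 2 * Real.exp (2 * t) ≤ b ^ 2 * ((1 - s) * 1 + s * Real.exp (2 * t₁)) := by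
        exact mul_le_mul_of_nonneg_left e2 (sq_nonneg b)
      have hg1' : a ^ 2 * Real.exp (-(2 * t₁)) + b ^ 2 * Real.exp (2 * t₁) < ε ^ 2 := by
        have h := hg1
        rw [sq_exp, sq_exp, show (2:ℝ) * -t₁ = -(2 * t₁) by ring] at h
        exact h
      have hse : s * (a ^ 2 * Real.exp (-(2 * t₁)) + b ^ 2 * Real.exp (2 * t₁)) < s * ε ^ 2 :=
        mul_lt_mul_of_pos_left hg1' hs0
      have hsr : s * ε ^ 2 ≤ s * r ^ 2 := by
        have h9 : ε ^ 2 ≤ r ^ 2 := by nlinarith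
        exact mul_le_mul_of_nonneg_left h9 hs0.le
      have habs : s * (a ^ 2 + b ^ 2) = s * r ^ 2 := by rw [hab]
      linarith [p1, p2]
    exact lt_of_pow_lt_pow_left₀ 2 hr.le hlt
  calc ENNReal.ofReal (Real.log (r / ε)) ≤ ENNReal.ofReal t₁ := ENNReal.ofReal_le_ofReal hlog
    _ = volume (Set.Ioc (0:ℝ) t₁) := by rw [Real.volume_Ioc]; simp
    _ ≤ _ := measure_mono hsub
end

section
/- Let A = diag(λ₁,…,λ_d) with |λᵢ| = 1 for all i. For any solution of the linear gradient flow ẋ = -Ax and any r > 0, the total arc length of the portion of the trajectory lying inside the ball B_r(0) is at most 2r√d. -/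
open MeasureTheory

private lemma key_decay {c r : ℝ} (hc : 0 ≤ c) (hr : 0 < r) {S : Set ℝ}
    (hS : ∀ t ∈ S, c * Real.exp (-t) ≤ r) :
    IntegrableOn (fun t => c * Real.exp (-t)) S ∧
      (∫ t in S, c * Real.exp (-t)) ≤ r := by
  rcases eq_or_lt_of_le hc with h0 | hc
  · simp only [← h0, zero_mul]
    exact ⟨integrableOn_zero, by simp [hr.le]⟩
  set c' : ℝ := -Real.log (r / c) with hc'
  have hsub : S ⊆ Set.Ici c' := by
    intro t ht
    have h1 : c * Real.exp (-t) ≤ r := hS t ht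
    have h2 : Real.exp (-t) ≤ r / c := by
      rw [le_div_iff₀ hc]; linarith [h1]
    have h3 : Real.exp (-t) ≤ Real.exp (Real.log (r / c)) := by
      rwa [Real.exp_log (div_pos hr hc)]
    have h4 : -t ≤ Real.log (r / c) := Real.exp_le_exp.mp h3
    simp only [Set.mem_Ici, hc']
    linarith
  have hint : IntegrableOn (fun t => c * Real.exp (-t)) (Set.Ici c') := by
    have h := (exp_neg_integrableOn_Ioi c' (one_pos)).const_mul c
    have h2 : IntegrableOn (fun t => c * Real.exp (-t)) (Set.Ioi c') := by
      simpa [neg_one_mul, IntegrableOn] using h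
    exact Iff.mpr integrableOn_Ici_iff_integrableOn_Ioi h2
  refine ⟨hint.mono_set hsub, ?_⟩
  calc (∫ t in S, c * Real.exp (-t))
      ≤ ∫ t in Set.Ici c', c * Real.exp (-t) := by
        apply setIntegral_mono_set hint
        · exact Filter.Eventually.of_forall fun t => by positivity
        · exact Filter.Eventually.of_forall hsub
    _ = r := by
        rw [integral_Ici_eq_integral_Ioi, MeasureTheory.integral_const_mul]
        have : (∫ t in Set.Ioi c', Real.exp (-t)) = Real.exp (-c') :=
          integral_exp_neg_Ioi c'
        rw [this, hc', neg_neg, Real.exp_log (div_pos hr hc)]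
        field_simp

private lemma key_grow {c r : ℝ} (hc : 0 ≤ c) (hr : 0 < r) {S : Set ℝ}
    (hS : ∀ t ∈ S, c * Real.exp t ≤ r) :
    IntegrableOn (fun t => c * Real.exp t) S ∧
      (∫ t in S, c * Real.exp t) ≤ r := by
  rcases eq_or_lt_of_le hc with h0 | hc
  · simp only [← h0, zero_mul]
    exact ⟨integrableOn_zero, by simp [hr.le]⟩
  set c' : ℝ := Real.log (r / c) with hc'
  have hsub : S ⊆ Set.Iic c' := by
    intro t ht
    have h1 : c * Real.exp t ≤ r := hS t ht
    have h2 : Real.exp t ≤ r / c := by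
      rw [le_div_iff₀ hc]; linarith [h1]
    have h3 : Real.exp t ≤ Real.exp (Real.log (r / c)) := by
      rwa [Real.exp_log (div_pos hr hc)]
    exact Real.exp_le_exp.mp h3
  have hint : IntegrableOn (fun t => c * Real.exp t) (Set.Iic c') :=
    (integrableOn_exp_Iic c').const_mul c
  refine ⟨hint.mono_set hsub, ?_⟩
  calc (∫ t in S, c * Real.exp t)
      ≤ ∫ t in Set.Iic c', c * Real.exp t := by
        apply setIntegral_mono_set hint
        · exact Filter.Eventually.of_forall fun t => by positivity
        · exact Filter.Eventually.of_forall hsub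
    _ = r := by
        rw [MeasureTheory.integral_const_mul, integral_exp_Iic, hc',
          Real.exp_log (div_pos hr hc)]
        field_simp

/-- For the linear gradient flow `ẋ = -Ax` with `A = diag(λ₁,…,λ_d)`,
`|λᵢ| = 1`, the arc length of any solution inside the ball `B_r(0)` is at most
`2r√d`. -/
theorem stmt_12 {d : ℕ} (lam : Fin d → ℝ) (hlam : ∀ i, |lam i| = 1)
    (x0 : EuclideanSpace ℝ (Fin d)) (r : ℝ) (hr : 0 < r)
    (x x' : ℝ → EuclideanSpace ℝ (Fin d))
    (hx : ∀ t : ℝ, x t = (WithLp.equiv 2 (Fin d → ℝ)).symm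
      (fun i => x0 i * Real.exp (-(lam i) * t)))
    (hx' : ∀ t : ℝ, x' t = (WithLp.equiv 2 (Fin d → ℝ)).symm
      (fun i => -(lam i) * (x0 i * Real.exp (-(lam i) * t)))) :
    (∫ t in {t : ℝ | ‖x t‖ ≤ r}, ‖x' t‖) ≤ 2 * r * Real.sqrt d := by
  rcases Nat.eq_zero_or_pos d with hd | hd
  · subst hd
    have hz : ∀ t : ℝ, ‖x' t‖ = 0 := by
      intro t
      rw [hx' t, EuclideanSpace.norm_eq]
      simp
    simp only [hz, integral_zero]
    positivity
  -- d ≥ 1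
  have hpm : ∀ i, lam i = 1 ∨ lam i = -1 := by
    intro i
    rcases abs_eq (zero_le_one) |>.mp (hlam i) with h | h
    · exact Or.inl h
    · exact Or.inr h
  set P : Finset (Fin d) := Finset.univ.filter (fun i => lam i = 1) with hP
  set a : ℝ := Real.sqrt (∑ i ∈ P, (x0 i) ^ 2) with ha
  set b : ℝ := Real.sqrt (∑ i ∈ Finset.univ.filter (fun i => ¬ lam i = 1), (x0 i) ^ 2) with hb
  have ha0 : 0 ≤ a := Real.sqrt_nonneg _
  have hb0 : 0 ≤ b := Real.sqrt_nonneg _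
  have ha2 : a ^ 2 = ∑ i ∈ P, (x0 i) ^ 2 :=
    Real.sq_sqrt (Finset.sum_nonneg fun i _ => sq_nonneg _)
  have hb2 : b ^ 2 = ∑ i ∈ Finset.univ.filter (fun i => ¬ lam i = 1), (x0 i) ^ 2 :=
    Real.sq_sqrt (Finset.sum_nonneg fun i _ => sq_nonneg _)
  have hsum : ∀ t : ℝ, (∑ i, (x0 i * Real.exp (-(lam i) * t)) ^ 2)
      = (a * Real.exp (-t)) ^ 2 + (b * Real.exp t) ^ 2 := by
    intro t
    rw [← Finset.sum_filter_add_sum_filter_not Finset.univ (fun i => lam i = 1)]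
    congr 1
    · rw [mul_pow, ha2, Finset.sum_mul]
      apply Finset.sum_congr rfl
      intro i hi
      have h1 : lam i = 1 := (Finset.mem_filter.mp hi).2
      rw [h1, mul_pow, neg_one_mul]
    · rw [mul_pow, hb2, Finset.sum_mul]
      apply Finset.sum_congr rfl
      intro i hi
      have h1 : ¬ lam i = 1 := (Finset.mem_filter.mp hi).2
      have h2 : lam i = -1 := (hpm i).resolve_left h1
      rw [h2, mul_pow, neg_neg, one_mul]
  have hnx : ∀ t : ℝ, ‖x t‖ = Real.sqrt ((a * Real.exp (-t)) ^ 2 + (b * Real.exp t) ^ 2) := by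
    intro t
    rw [hx t, EuclideanSpace.norm_eq]
    simp only [WithLp.equiv_symm_apply, WithLp.ofLp_toLp, Real.norm_eq_abs, sq_abs]
    rw [hsum t]
  have hnx' : ∀ t : ℝ, ‖x' t‖ = ‖x t‖ := by
    intro t
    rw [hx' t, hx t, EuclideanSpace.norm_eq, EuclideanSpace.norm_eq]
    congr 1
    apply Finset.sum_congr rfl
    intro i _
    simp only [WithLp.equiv_symm_apply, WithLp.ofLp_toLp, Real.norm_eq_abs, sq_abs]
    have h1 : (lam i) ^ 2 = 1 := by rw [← sq_abs, hlam i]; norm_num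
    rw [mul_pow, neg_pow, h1]
    ring
  have hub : ∀ t : ℝ, ‖x t‖ ≤ a * Real.exp (-t) + b * Real.exp t := by
    intro t
    rw [hnx t]
    have h1 : (a * Real.exp (-t)) ^ 2 + (b * Real.exp t) ^ 2
        ≤ (a * Real.exp (-t) + b * Real.exp t) ^ 2 := by
      nlinarith [mul_nonneg ha0 (Real.exp_pos (-t)).le, mul_nonneg hb0 (Real.exp_pos t).le]
    calc Real.sqrt ((a * Real.exp (-t)) ^ 2 + (b * Real.exp t) ^ 2)
        ≤ Real.sqrt ((a * Real.exp (-t) + b * Real.exp t) ^ 2) := Real.sqrt_le_sqrt h1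
      _ = a * Real.exp (-t) + b * Real.exp t := Real.sqrt_sq (by positivity)
  have hla : ∀ t : ℝ, a * Real.exp (-t) ≤ ‖x t‖ := by
    intro t
    rw [hnx t]
    calc a * Real.exp (-t) = Real.sqrt ((a * Real.exp (-t)) ^ 2) :=
          (Real.sqrt_sq (by positivity)).symm
      _ ≤ _ := Real.sqrt_le_sqrt (le_add_of_nonneg_right (sq_nonneg _))
  have hlb : ∀ t : ℝ, b * Real.exp t ≤ ‖x t‖ := by
    intro t
    rw [hnx t]
    calc b * Real.exp t = Real.sqrt ((b * Real.exp t) ^ 2) :=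
          (Real.sqrt_sq (by positivity)).symm
      _ ≤ _ := Real.sqrt_le_sqrt (le_add_of_nonneg_left (sq_nonneg _))
  set S : Set ℝ := {t : ℝ | ‖x t‖ ≤ r} with hS
  obtain ⟨hia, hIa⟩ := key_decay ha0 hr (S := S)
    (fun t ht => (hla t).trans ht)
  obtain ⟨hib, hIb⟩ := key_grow hb0 hr (S := S)
    (fun t ht => (hlb t).trans ht)
  have hsd : (1:ℝ) ≤ Real.sqrt d := by
    rw [show (1:ℝ) = Real.sqrt 1 by simp]
    exact Real.sqrt_le_sqrt (by exact_mod_cast hd)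
  calc (∫ t in S, ‖x' t‖) = ∫ t in S, ‖x t‖ := by simp only [hnx']
    _ ≤ ∫ t in S, (a * Real.exp (-t) + b * Real.exp t) :=
        integral_mono_of_nonneg (Filter.Eventually.of_forall fun t => norm_nonneg _)
          (hia.add hib) (Filter.Eventually.of_forall fun t => hub t)
    _ = (∫ t in S, a * Real.exp (-t)) + ∫ t in S, b * Real.exp t :=
        integral_add hia hib
    _ ≤ r + r := add_le_add hIa hIb
    _ ≤ 2 * r * Real.sqrt d := by nlinarith
end

section
/- Let A = diag(λ₁,…,λ_d) be diagonal and invertible. For any solution x(t) of ẋ = -Ax not passing through 0, the time spent by the corresponding normalized flow (equivalently, the arc length of x) inside B_r(0) is at most 2√d · r. -/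
open MeasureTheory

private lemma aux_l1 {d : ℕ} (v : Fin d → ℝ) :
    ∑ i, |v i| ≤ Real.sqrt d * Real.sqrt (∑ i, (v i) ^ 2) := by
  have h : (∑ i, |v i|) ^ 2 ≤ (d : ℝ) * ∑ i, (v i) ^ 2 := by
    have := sq_sum_le_card_mul_sum_sq (s := (Finset.univ : Finset (Fin d)))
      (f := fun i => |v i|)
    simpa [sq_abs] using this
  calc ∑ i, |v i| = Real.sqrt ((∑ i, |v i|) ^ 2) :=
        (Real.sqrt_sq (by positivity)).symm
    _ ≤ Real.sqrt ((d : ℝ) * ∑ i, (v i) ^ 2) := Real.sqrt_le_sqrt h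
    _ = _ := Real.sqrt_mul (by positivity) _

private lemma aux_l2 {d : ℕ} (v : Fin d → ℝ) :
    Real.sqrt (∑ i, (v i) ^ 2) ≤ ∑ i, |v i| := by
  have h : (∑ i, (v i) ^ 2) ≤ (∑ i, |v i|) ^ 2 := by
    have := Finset.sum_sq_le_sq_sum_of_nonneg (s := (Finset.univ : Finset (Fin d)))
      (f := fun i => |v i|) (fun i _ => abs_nonneg _)
    simpa [sq_abs] using this
  calc Real.sqrt (∑ i, (v i) ^ 2) ≤ Real.sqrt ((∑ i, |v i|) ^ 2) := Real.sqrt_le_sqrt h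
    _ = _ := Real.sqrt_sq (by positivity)

private lemma aux_exp_convex (c : ℝ) :
    ConvexOn ℝ Set.univ (fun t : ℝ => Real.exp (c * t)) := by
  refine ⟨convex_univ, fun p _ q _ a b ha hb hab => ?_⟩
  have h := convexOn_exp.2 (Set.mem_univ (c * p)) (Set.mem_univ (c * q)) ha hb hab
  simp only [smul_eq_mul] at h ⊢
  have he : c * (a * p + b * q) = a * (c * p) + b * (c * q) := by ring
  rw [he]; exact h

/-- For the linear gradient flow `ẋ = -Ax` with `A = diag(λ₁,…,λ_d)` invertible,
the arc length of any solution not passing through `0` inside the ball `B_r(0)`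
(equivalently the time spent there by the normalized flow) is at most `2√d·r`. -/
theorem stmt_13 {d : ℕ} (lam : Fin d → ℝ) (hlam : ∀ i, lam i ≠ 0)
    (x0 : EuclideanSpace ℝ (Fin d)) (r : ℝ) (hr : 0 < r)
    (x x' : ℝ → EuclideanSpace ℝ (Fin d))
    (hx : ∀ t : ℝ, x t = (WithLp.equiv 2 (Fin d → ℝ)).symm
      (fun i => x0 i * Real.exp (-(lam i) * t)))
    (hx' : ∀ t : ℝ, x' t = (WithLp.equiv 2 (Fin d → ℝ)).symm
      (fun i => -(lam i) * (x0 i * Real.exp (-(lam i) * t))))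
    (hnz : ∀ t : ℝ, x t ≠ 0) :
    (∫ t in {t : ℝ | ‖x t‖ ≤ r}, ‖x' t‖) ≤ 2 * Real.sqrt d * r := by
  set S : Set ℝ := {t : ℝ | ‖x t‖ ≤ r} with hS
  have hC : (0 : ℝ) ≤ 2 * Real.sqrt d * r := by positivity
  -- norm formulas
  have hnx : ∀ t, ‖x t‖ = Real.sqrt (∑ i, (x0 i * Real.exp (-lam i * t)) ^ 2) := by
    intro t
    rw [hx t, EuclideanSpace.norm_eq]
    congr 1
    refine Finset.sum_congr rfl fun i _ => ?_
    rw [WithLp.equiv_symm_apply, PiLp.toLp_apply, Real.norm_eq_abs, sq_abs]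
  have hnx' : ∀ t, ‖x' t‖
      = Real.sqrt (∑ i, (lam i * (x0 i * Real.exp (-lam i * t))) ^ 2) := by
    intro t
    rw [hx' t, EuclideanSpace.norm_eq]
    refine congrArg _ (Finset.sum_congr rfl fun i _ => ?_)
    rw [WithLp.equiv_symm_apply, PiLp.toLp_apply, Real.norm_eq_abs, sq_abs, neg_mul, neg_sq]
  -- ℓ¹ bound on coordinates of x t
  have hsum_x : ∀ t, t ∈ S → ∑ i, |x0 i| * Real.exp (-lam i * t) ≤ Real.sqrt d * r := by
    intro t ht
    have h1 : ∑ i, |x0 i| * Real.exp (-lam i * t)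
        = ∑ i, |x0 i * Real.exp (-lam i * t)| := by
      refine Finset.sum_congr rfl fun i _ => ?_
      rw [abs_mul, abs_of_pos (Real.exp_pos _)]
    rw [h1]
    calc ∑ i, |x0 i * Real.exp (-lam i * t)|
        ≤ Real.sqrt d * Real.sqrt (∑ i, (x0 i * Real.exp (-lam i * t)) ^ 2) :=
          aux_l1 _
      _ = Real.sqrt d * ‖x t‖ := by rw [hnx t]
      _ ≤ Real.sqrt d * r := by
          exact mul_le_mul_of_nonneg_left ht (Real.sqrt_nonneg _)
  -- the key estimate on compact intervals
  have key : ∀ a b : ℝ, a ∈ S → b ∈ S → a ≤ b →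
      (∫ t in Set.Icc a b, ‖x' t‖) ≤ 2 * Real.sqrt d * r := by
    intro a b ha hb hab
    rw [MeasureTheory.integral_Icc_eq_integral_Ioc,
      ← intervalIntegral.integral_of_le hab]
    have hcont1 : Continuous fun t => ‖x' t‖ := by
      have : (fun t => ‖x' t‖)
          = fun t => Real.sqrt (∑ i, (lam i * (x0 i * Real.exp (-lam i * t))) ^ 2) :=
        funext hnx'
      rw [this]; fun_prop
    have hcont2 : Continuous fun t : ℝ =>
        ∑ i, |lam i| * (|x0 i| * Real.exp (-lam i * t)) := by fun_prop
    have hmono : ∀ t ∈ Set.uIcc a b,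
        ‖x' t‖ ≤ ∑ i, |lam i| * (|x0 i| * Real.exp (-lam i * t)) := by
      intro t _
      rw [hnx' t]
      refine (aux_l2 _).trans (le_of_eq ?_)
      refine Finset.sum_congr rfl fun i _ => ?_
      rw [abs_mul, abs_mul, abs_of_pos (Real.exp_pos _)]
    have step1 : (∫ t in a..b, ‖x' t‖)
        ≤ ∫ t in a..b, ∑ i, |lam i| * (|x0 i| * Real.exp (-lam i * t)) :=
      intervalIntegral.integral_mono_on hab (hcont1.intervalIntegrable a b)
        (hcont2.intervalIntegrable a b) (fun t ht => hmono t (Set.mem_uIcc_of_le ht.1 ht.2))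
    have step2 : (∫ t in a..b, ∑ i, |lam i| * (|x0 i| * Real.exp (-lam i * t)))
        = ∑ i, ∫ t in a..b, |lam i| * (|x0 i| * Real.exp (-lam i * t)) := by
      refine intervalIntegral.integral_finset_sum fun i _ => ?_
      exact (by fun_prop : Continuous fun t : ℝ =>
        |lam i| * (|x0 i| * Real.exp (-lam i * t))).intervalIntegrable a b
    have step3 : ∀ i, (∫ t in a..b, |lam i| * (|x0 i| * Real.exp (-lam i * t)))
        ≤ |x0 i| * Real.exp (-lam i * a) + |x0 i| * Real.exp (-lam i * b) := by
      intro i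
      have hderiv : ∀ t ∈ Set.uIcc a b,
          HasDerivAt (fun t => -((|lam i| * |x0 i|) / lam i) * Real.exp (-lam i * t))
            (|lam i| * (|x0 i| * Real.exp (-lam i * t))) t := by
        intro t _
        have h1 : HasDerivAt (fun t : ℝ => -lam i * t) (-lam i * 1) t :=
          (hasDerivAt_id t).const_mul (-lam i)
        have h2 := (h1.exp).const_mul (-((|lam i| * |x0 i|) / lam i))
        refine h2.congr_deriv ?_
        have hl := hlam i
        field_simp
      have hint : IntervalIntegrable
          (fun t => |lam i| * (|x0 i| * Real.exp (-lam i * t))) volume a b :=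
        (by fun_prop : Continuous fun t : ℝ =>
          |lam i| * (|x0 i| * Real.exp (-lam i * t))).intervalIntegrable a b
      rw [intervalIntegral.integral_eq_sub_of_hasDerivAt hderiv hint]
      have ea := mul_nonneg (abs_nonneg (x0 i)) (Real.exp_pos (-lam i * a)).le
      have eb := mul_nonneg (abs_nonneg (x0 i)) (Real.exp_pos (-lam i * b)).le
      rcases (hlam i).lt_or_gt with hneg | hpos
      · rw [abs_of_neg hneg]
        have h3 : -(-lam i * |x0 i| / lam i) = |x0 i| := by
          have hl := hlam i
          field_simp
        rw [h3]
        linarith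
      · rw [abs_of_pos hpos]
        have h3 : -(lam i * |x0 i| / lam i) = -|x0 i| := by
          have hl := hlam i
          field_simp
        rw [h3]
        linarith
    calc (∫ t in a..b, ‖x' t‖)
        ≤ ∑ i, ∫ t in a..b, |lam i| * (|x0 i| * Real.exp (-lam i * t)) :=
          step1.trans (le_of_eq step2)
      _ ≤ ∑ i, (|x0 i| * Real.exp (-lam i * a) + |x0 i| * Real.exp (-lam i * b)) :=
          Finset.sum_le_sum fun i _ => step3 i
      _ = (∑ i, |x0 i| * Real.exp (-lam i * a)) + ∑ i, |x0 i| * Real.exp (-lam i * b) :=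
          Finset.sum_add_distrib
      _ ≤ Real.sqrt d * r + Real.sqrt d * r :=
          add_le_add (hsum_x a ha) (hsum_x b hb)
      _ = 2 * Real.sqrt d * r := by ring
  -- S is closed and convex
  have hScont : Continuous fun t => ‖x t‖ := by
    have : (fun t => ‖x t‖)
        = fun t => Real.sqrt (∑ i, (x0 i * Real.exp (-lam i * t)) ^ 2) := funext hnx
    rw [this]; fun_prop
  have hScl : IsClosed S := isClosed_le hScont continuous_const
  have hSconv : Convex ℝ S := by
    have hg : ConvexOn ℝ Set.univ
        (fun t : ℝ => ∑ i, (x0 i * Real.exp (-lam i * t)) ^ 2) := by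
      have hterm : ∀ i : Fin d, ConvexOn ℝ Set.univ
          (fun t : ℝ => (x0 i * Real.exp (-lam i * t)) ^ 2) := by
        intro i
        have h1 := (aux_exp_convex (-2 * lam i)).smul (sq_nonneg (x0 i))
        have he : (fun t : ℝ => (x0 i) ^ 2 • Real.exp (-2 * lam i * t))
            = fun t : ℝ => (x0 i * Real.exp (-lam i * t)) ^ 2 := by
          funext t
          have h2 : Real.exp (-2 * lam i * t)
              = Real.exp (-lam i * t) * Real.exp (-lam i * t) := by
            rw [← Real.exp_add]; ring_nf
          rw [smul_eq_mul, h2]; ring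
        rwa [he] at h1
      have hsum : ∀ s : Finset (Fin d), ConvexOn ℝ Set.univ
          (fun t : ℝ => ∑ i ∈ s, (x0 i * Real.exp (-lam i * t)) ^ 2) := by
        intro s
        induction s using Finset.cons_induction with
        | empty => simpa using convexOn_const (0 : ℝ) convex_univ
        | cons i s hi ih =>
            simp only [Finset.sum_cons]
            exact (hterm i).add ih
      exact hsum Finset.univ
    have heq : S = {t ∈ Set.univ |
        (∑ i, (x0 i * Real.exp (-lam i * t)) ^ 2) ≤ r ^ 2} := by
      ext t
      simp only [hS, Set.mem_setOf_eq, Set.mem_univ, true_and, Set.sep_setOf]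
      rw [hnx t]
      constructor
      · intro h
        have := Real.sqrt_le_iff.mp h
        exact this.2
      · intro h
        exact Real.sqrt_le_iff.mpr ⟨hr.le, h⟩
    rw [heq]
    exact hg.convex_le (r ^ 2)
  -- limit argument
  by_cases hint : IntegrableOn (fun t => ‖x' t‖) S volume
  · set s : ℕ → Set ℝ := fun n => S ∩ Set.Icc (-(n : ℝ)) n with hsdef
    have hsm : ∀ n, MeasurableSet (s n) :=
      fun n => hScl.measurableSet.inter measurableSet_Icc
    have hmono : Monotone s := by
      intro m n hmn
      have hmn' : (m : ℝ) ≤ n := by exact_mod_cast hmn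
      exact Set.inter_subset_inter (le_refl S) (Set.Icc_subset_Icc (by linarith) hmn')
    have hunion : (⋃ n, s n) = S := by
      ext t
      simp only [Set.mem_iUnion, hsdef, Set.mem_inter_iff, Set.mem_Icc]
      constructor
      · rintro ⟨n, hn, -⟩; exact hn
      · intro ht
        refine ⟨⌈|t|⌉₊, ht, ?_, ?_⟩
        · have := Nat.le_ceil |t|
          have h2 := neg_abs_le t
          linarith
        · exact (le_abs_self t).trans (Nat.le_ceil |t|)
    have htend := tendsto_setIntegral_of_monotone hsm hmono (hunion ▸ hint)
    rw [hunion] at htend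
    refine le_of_tendsto' htend fun n => ?_
    have hK : IsCompact (s n) := isCompact_Icc.inter_left hScl
    rcases Set.eq_empty_or_nonempty (s n) with hne | hne
    · rw [hne]; simpa using hC
    · set a := sInf (s n)
      set b := sSup (s n)
      have haK : a ∈ s n := hK.sInf_mem hne
      have hbK : b ∈ s n := hK.sSup_mem hne
      have hab : a ≤ b := le_csSup hK.bddAbove haK
      have hKconv : Convex ℝ (s n) := hSconv.inter (convex_Icc _ _)
      have hKeq : s n = Set.Icc a b := by
        apply Set.Subset.antisymm
        · intro t ht
          exact ⟨csInf_le hK.bddBelow ht, le_csSup hK.bddAbove ht⟩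
        · exact (convex_iff_ordConnected.mp hKconv).out haK hbK
      rw [hKeq]
      exact key a b haK.1 hbK.1 hab
  · rw [MeasureTheory.integral_undef hint]
    exact hC
end

section
/- Let f : ℝ^d → ℝ be C³ with third derivatives uniformly bounded by Ĉ (componentwise), and let x* be a critical point whose Hessian has all eigenvalue magnitudes at least λ_min > 0. Then f has no other critical point in the ball of radius 2λ_min/Ĉ around x*: for 0 < ‖x - x*‖ < 2λ_min/Ĉ, ∇f(x) ≠ 0. -/
open InnerProductSpace

local notation "⟪" x ", " y "⟫" => @inner ℝ _ _ x y

lemma aux_eig_lb {d : ℕ} (H : Matrix (Fin d) (Fin d) ℝ) (hsym : H.IsHermitian)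
    {lmin : ℝ} (hlmin : 0 ≤ lmin) (heig : ∀ i, lmin ≤ |hsym.eigenvalues i|)
    (v : EuclideanSpace ℝ (Fin d)) :
    lmin * ‖v‖ ≤ ‖(Matrix.toEuclideanLin H) v‖ := by
  set T := Matrix.toEuclideanLin H with hT
  set e := hsym.eigenvectorBasis with he
  set μ := hsym.eigenvalues with hμ
  have hTsym : T.IsSymmetric := Matrix.isHermitian_iff_isSymmetric.1 hsym
  have hTe : ∀ j, T (e j) = μ j • e j := by
    intro j
    ext k
    have := congrFun (hsym.mulVec_eigenvectorBasis j) k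
    simpa [hT, Matrix.toEuclideanLin_apply] using this
  have key : ∀ w : EuclideanSpace ℝ (Fin d), ‖w‖ ^ 2 = ∑ i, ⟪e i, w⟫ ^ 2 := by
    intro w
    have h := e.sum_inner_mul_inner w w
    rw [real_inner_self_eq_norm_sq] at h
    rw [← h]
    refine Finset.sum_congr rfl fun i _ => ?_
    rw [real_inner_comm w (e i), sq]
  have hinner : ∀ i, ⟪e i, T v⟫ = μ i * ⟪e i, v⟫ := by
    intro i
    rw [← hTsym (e i) v, hTe i, real_inner_smul_left]
  have h2 : (lmin * ‖v‖) ^ 2 ≤ ‖T v‖ ^ 2 := by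
    rw [key (T v), mul_pow, key v, Finset.mul_sum]
    refine Finset.sum_le_sum fun i _ => ?_
    rw [hinner i, mul_pow]
    have h3 : lmin ^ 2 ≤ μ i ^ 2 := by
      have := heig i
      nlinarith [abs_nonneg (μ i), sq_abs (μ i)]
    nlinarith [sq_nonneg (⟪e i, v⟫)]
  nlinarith [norm_nonneg (T v), mul_nonneg hlmin (norm_nonneg v)]

set_option maxHeartbeats 2000000 in
/-- If `f` is `C³` with `‖D³f‖ ≤ Ĉ` everywhere, and `x*` is a critical point
whose Hessian eigenvalues all have magnitude at least `λmin > 0`, then `f` has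
no other critical point within distance `2λmin/Ĉ` of `x*`. -/
theorem stmt_14 {d : ℕ} (f : EuclideanSpace ℝ (Fin d) → ℝ)
    (hf : ContDiff ℝ 3 f) (Chat : ℝ) (hChat : 0 < Chat)
    (hD3 : ∀ x : EuclideanSpace ℝ (Fin d), ‖iteratedFDeriv ℝ 3 f x‖ ≤ Chat)
    (xstar : EuclideanSpace ℝ (Fin d)) (hcrit : gradient f xstar = 0)
    (H : Matrix (Fin d) (Fin d) ℝ) (hsym : H.IsHermitian)
    (hH : HasFDerivAt (gradient f)
      (Matrix.toEuclideanLin H).toContinuousLinearMap xstar)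
    (lmin : ℝ) (hlmin : 0 < lmin)
    (heig : ∀ i : Fin d, lmin ≤ |hsym.eigenvalues i|) :
    ∀ x : EuclideanSpace ℝ (Fin d),
      x ≠ xstar → ‖x - xstar‖ < 2 * lmin / Chat → gradient f x ≠ 0 := by
  intro x hne hlt
  set v := x - xstar with hv
  have hvpos : 0 < ‖v‖ := norm_pos_iff.2 (sub_ne_zero.2 hne)
  set Hc := (Matrix.toEuclideanLin H).toContinuousLinearMap with hHc
  -- differentiability
  have hf1 : ContDiff ℝ 2 (fderiv ℝ f) := hf.fderiv_right (by norm_num)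
  have hf2 : ContDiff ℝ 1 (fderiv ℝ (fderiv ℝ f)) := hf1.fderiv_right (by norm_num)
  have hdiff2 : Differentiable ℝ (fderiv ℝ (fderiv ℝ f)) := hf2.differentiable (by norm_num)
  have hdiff1 : Differentiable ℝ (fderiv ℝ f) := hf1.differentiable (by norm_num)
  letI : NormedAddCommGroup (EuclideanSpace ℝ (Fin d) →L[ℝ] EuclideanSpace ℝ (Fin d) →L[ℝ] ℝ) :=
    inferInstance
  letI : NormedSpace ℝ (EuclideanSpace ℝ (Fin d) →L[ℝ] EuclideanSpace ℝ (Fin d) →L[ℝ] ℝ) :=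
    inferInstance
  -- third derivative bound
  have hbound3 : ∀ y, ‖fderiv ℝ (fderiv ℝ (fderiv ℝ f)) y‖ ≤ Chat := by
    intro y
    have h0 : ‖fderiv ℝ (fderiv ℝ (fderiv ℝ f)) y‖
        = ‖iteratedFDeriv ℝ 0 (fderiv ℝ (fderiv ℝ (fderiv ℝ f))) y‖ := by
      rw [norm_iteratedFDeriv_zero]
    rw [h0, norm_iteratedFDeriv_fderiv, norm_iteratedFDeriv_fderiv,
      norm_iteratedFDeriv_fderiv]
    exact hD3 y
  -- Lipschitz bound on the second derivative
  have hlip : ∀ y : EuclideanSpace ℝ (Fin d),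
      ‖fderiv ℝ (fderiv ℝ f) y - fderiv ℝ (fderiv ℝ f) xstar‖ ≤ Chat * ‖y - xstar‖ := by
    intro y
    exact (convex_univ).norm_image_sub_le_of_norm_fderiv_le
      (fun z _ => (hdiff2 z)) (fun z _ => hbound3 z) trivial trivial
  -- the isometry from the dual
  set ι : (EuclideanSpace ℝ (Fin d) →L[ℝ] ℝ) ≃ₗᵢ[ℝ] EuclideanSpace ℝ (Fin d) :=
    (InnerProductSpace.toDual ℝ (EuclideanSpace ℝ (Fin d))).symm with hι
  set ιL : (EuclideanSpace ℝ (Fin d) →L[ℝ] ℝ) →L[ℝ] EuclideanSpace ℝ (Fin d) :=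
    ι.toContinuousLinearEquiv.toContinuousLinearMap with hιL
  have hgradeq : gradient f = fun y => ιL (fderiv ℝ f y) := rfl
  -- derivative of the gradient everywhere
  have hG : ∀ y, HasFDerivAt (gradient f) (ιL.comp (fderiv ℝ (fderiv ℝ f) y)) y := by
    intro y
    rw [hgradeq]
    exact ιL.hasFDerivAt.comp y (hdiff1 y).hasFDerivAt
  have hGxstar : ιL.comp (fderiv ℝ (fderiv ℝ f) xstar) = Hc :=
    (hG xstar).unique hH
  -- the curve and its derivative
  set ψ : ℝ → EuclideanSpace ℝ (Fin d) :=
    fun t => gradient f (xstar + t • v) - t • Hc v with hψdef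
  set ψ' : ℝ → EuclideanSpace ℝ (Fin d) :=
    fun t => (ιL.comp (fderiv ℝ (fderiv ℝ f) (xstar + t • v))) v - Hc v with hψ'def
  have hψ : ∀ t : ℝ, HasDerivAt ψ (ψ' t) t := by
    intro t
    have hline : HasDerivAt (fun t : ℝ => xstar + t • v) v t := by
      simpa using ((hasDerivAt_id t).smul_const v).const_add xstar
    have h1 : HasDerivAt (fun t : ℝ => gradient f (xstar + t • v))
        ((ιL.comp (fderiv ℝ (fderiv ℝ f) (xstar + t • v))) v) t :=
      (hG (xstar + t • v)).comp_hasDerivAt (f := fun t : ℝ => xstar + t • v) t hline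
    have h2 : HasDerivAt (fun t : ℝ => t • Hc v) (Hc v) t := by
      simpa using (hasDerivAt_id t).smul_const (Hc v)
    exact h1.sub h2
  have hbound : ∀ t ∈ Set.Ico (0:ℝ) 1, ‖ψ' t‖ ≤ Chat * ‖v‖ ^ 2 * t := by
    intro t ht
    have h1 : ψ' t = ιL ((fderiv ℝ (fderiv ℝ f) (xstar + t • v)
        - fderiv ℝ (fderiv ℝ f) xstar) v) := by
      rw [hψ'def]
      simp only [← hGxstar, ContinuousLinearMap.comp_apply,
        ContinuousLinearMap.sub_apply, map_sub]
    rw [h1]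
    have h2 : ‖(fderiv ℝ (fderiv ℝ f) (xstar + t • v)
        - fderiv ℝ (fderiv ℝ f) xstar) v‖
        ≤ Chat * ‖(xstar + t • v) - xstar‖ * ‖v‖ :=
      le_trans ((fderiv ℝ (fderiv ℝ f) (xstar + t • v)
        - fderiv ℝ (fderiv ℝ f) xstar).le_opNorm v)
        (mul_le_mul_of_nonneg_right (hlip _) (norm_nonneg v))
    have h3 : ‖(xstar + t • v) - xstar‖ = t * ‖v‖ := by
      rw [add_sub_cancel_left, norm_smul, Real.norm_eq_abs, abs_of_nonneg ht.1]
    calc ‖ιL ((fderiv ℝ (fderiv ℝ f) (xstar + t • v)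
        - fderiv ℝ (fderiv ℝ f) xstar) v)‖
        = ‖(fderiv ℝ (fderiv ℝ f) (xstar + t • v)
        - fderiv ℝ (fderiv ℝ f) xstar) v‖ := by
          simp only [hιL, ContinuousLinearMap.sub_apply, map_sub,
            ContinuousLinearEquiv.coe_coe, LinearIsometryEquiv.coe_toContinuousLinearEquiv]
          rw [← map_sub, ι.norm_map]
      _ ≤ Chat * ‖(xstar + t • v) - xstar‖ * ‖v‖ := h2
      _ = Chat * ‖v‖ ^ 2 * t := by rw [h3]; ring
  have hB : ∀ t : ℝ, HasDerivAt (fun t => Chat * ‖v‖ ^ 2 * t ^ 2 / 2)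
      (Chat * ‖v‖ ^ 2 * t) t := by
    intro t
    have h := ((hasDerivAt_pow 2 t).const_mul (Chat * ‖v‖ ^ 2)).div_const 2
    refine h.congr_deriv ?_
    push_cast
    ring
  have ha : ‖ψ 0‖ ≤ Chat * ‖v‖ ^ 2 * (0:ℝ) ^ 2 / 2 := by
    simp [hψdef, hcrit]
  have hmain := image_norm_le_of_norm_deriv_right_le_deriv_boundary
    (fun t _ => (hψ t).continuousAt.continuousWithinAt)
    (fun t _ => (hψ t).hasDerivWithinAt) ha hB hbound
    (Set.mem_Icc.2 ⟨zero_le_one, le_refl 1⟩)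
  have hψ1 : ψ 1 = gradient f x - Hc v := by
    rw [hψdef]; simp [hv]
  rw [hψ1] at hmain
  -- eigenvalue lower bound
  have hHcv : lmin * ‖v‖ ≤ ‖Hc v‖ := by
    have h5 := aux_eig_lb H hsym hlmin.le heig v
    simpa [hHc] using h5
  intro hzero
  rw [hzero, zero_sub, norm_neg] at hmain
  have hsmall : Chat * ‖v‖ ^ 2 * (1:ℝ) ^ 2 / 2 < lmin * ‖v‖ := by
    have h4 : ‖v‖ * Chat < 2 * lmin := by
      rw [← lt_div_iff₀ hChat] at *
      exact hlt
    nlinarith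
  linarith
end

section
/- Let f : ℝ^d → ℝ be C², let x* be a non-degenerate critical point of f with Hessian condition number κ, and let C > 4. Then for all sufficiently small r > 0, every solution x(t) of the normalized gradient flow ẋ = -∇f(x)/‖∇f(x)‖ defined on its maximal interval [0,T) satisfies ℒ¹({t ∈ [0,T) : x(t) ∈ B_r(x*) \ {x*}}) ≤ C√κ · r. -/
open MeasureTheory
set_option maxHeartbeats 1000000
open MeasureTheory

lemma side_bound {S : Set ℝ} (hSm : MeasurableSet S) {u u' : ℝ → ℝ}
    (hu : ∀ t ∈ S, HasDerivAt u (u' t) t) (hinj : Set.InjOn u S)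
    {k B : ℝ} (hk : 0 < k) (hB : 0 ≤ B)
    (hmem : ∀ t ∈ S, 0 < u t ∧ u t ≤ B ∧ k * Real.sqrt (u t) ≤ |u' t|) :
    volume S ≤ ENNReal.ofReal (2 * Real.sqrt B / k) := by
  classical
  set v : ℝ → ℝ := fun t => Real.sqrt (u t) with hv
  set v' : ℝ → ℝ := fun t => 1 / (2 * Real.sqrt (u t)) * u' t with hv'
  have hvd : ∀ t ∈ S, HasDerivAt v (v' t) t := by
    intro t ht
    exact (Real.hasDerivAt_sqrt (ne_of_gt (hmem t ht).1)).comp t (hu t ht)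
  have hvinj : Set.InjOn v S := by
    intro s hs t ht hst
    apply hinj hs ht
    have h1 := (hmem s hs).1.le
    have h2 := (hmem t ht).1.le
    have := congrArg (fun z => z ^ 2) hst
    simpa [hv, Real.sq_sqrt h1, Real.sq_sqrt h2] using this
  have hdet : ∀ t ∈ S, ENNReal.ofReal (k / 2) ≤
      ENNReal.ofReal |(ContinuousLinearMap.smulRight (1 : ℝ →L[ℝ] ℝ) (v' t)).det| := by
    intro t ht
    rw [show (ContinuousLinearMap.smulRight (1 : ℝ →L[ℝ] ℝ) (v' t)).det = v' t from
      ContinuousLinearMap.det_toSpanSingleton (v' t)]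
    apply ENNReal.ofReal_le_ofReal
    obtain ⟨h1, h2, h3⟩ := hmem t ht
    have hs : 0 < Real.sqrt (u t) := Real.sqrt_pos.2 h1
    have habs : |v' t| = |u' t| / (2 * Real.sqrt (u t)) := by
      rw [hv', abs_mul, abs_of_pos (by positivity : (0:ℝ) < 1 / (2 * Real.sqrt (u t)))]
      ring
    rw [habs, le_div_iff₀ (by positivity)]
    calc k / 2 * (2 * Real.sqrt (u t)) = k * Real.sqrt (u t) := by ring
    _ ≤ |u' t| := h3
  have hfderiv : ∀ t ∈ S, HasFDerivWithinAt v
      (ContinuousLinearMap.smulRight (1 : ℝ →L[ℝ] ℝ) (v' t)) S t :=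
    fun t ht => ((hvd t ht).hasFDerivAt).hasFDerivWithinAt
  have himg : volume (v '' S) ≤ ENNReal.ofReal (Real.sqrt B) := by
    have hsub : v '' S ⊆ Set.Icc 0 (Real.sqrt B) := by
      rintro _ ⟨t, ht, rfl⟩
      exact ⟨Real.sqrt_nonneg _, Real.sqrt_le_sqrt (hmem t ht).2.1⟩
    refine le_trans (measure_mono hsub) ?_
    rw [Real.volume_Icc]
    simp
  have hmain : ENNReal.ofReal (k / 2) * volume S ≤ ENNReal.ofReal (Real.sqrt B) := by
    calc ENNReal.ofReal (k / 2) * volume S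
        = ∫⁻ _ in S, ENNReal.ofReal (k / 2) ∂volume := by
          rw [setLIntegral_const, mul_comm]
      _ ≤ ∫⁻ t in S, ENNReal.ofReal
            |(ContinuousLinearMap.smulRight (1 : ℝ →L[ℝ] ℝ) (v' t)).det| ∂volume :=
          setLIntegral_mono' hSm hdet
      _ ≤ volume (v '' S) :=
          lintegral_abs_det_fderiv_le_addHaar_image volume hSm hfderiv hvinj
      _ ≤ ENNReal.ofReal (Real.sqrt B) := himg
  have hk2 : (0:ℝ) < k / 2 := by positivity
  rw [mul_comm] at hmain
  rw [← ENNReal.le_div_iff_mul_le (Or.inl (by simp [ENNReal.ofReal_pos.2 hk2, ne_of_gt]))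
    (Or.inl ENNReal.ofReal_ne_top)] at hmain
  refine le_trans hmain (le_of_eq ?_)
  rw [← ENNReal.ofReal_div_of_pos hk2]
  congr 1
  field_simp
open Finset in
lemma spectral_bounds {d : ℕ} [NeZero d] (H : Matrix (Fin d) (Fin d) ℝ)
    (hsym : H.IsHermitian) {m M : ℝ} (hm0 : 0 ≤ m)
    (hm : ∀ i, m ≤ |hsym.eigenvalues i|) (hM : ∀ i, |hsym.eigenvalues i| ≤ M)
    (y : EuclideanSpace ℝ (Fin d)) :
    m * ‖y‖ ≤ ‖Matrix.toEuclideanLin H y‖ ∧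
    m * |(inner ℝ y (Matrix.toEuclideanLin H y))| ≤ ‖Matrix.toEuclideanLin H y‖ ^ 2 ∧
    |(inner ℝ y (Matrix.toEuclideanLin H y))| ≤ M * ‖y‖ ^ 2 := by
  classical
  set A := Matrix.toEuclideanLin H with hA
  set b := hsym.eigenvectorBasis with hb
  set lam := hsym.eigenvalues with hlam
  have hAb : ∀ i, A (b i) = lam i • b i := by
    intro i
    have h1 := hsym.mulVec_eigenvectorBasis i
    ext j
    have := congrFun h1 j
    simpa [hA, hb, hlam, Matrix.toEuclideanLin_apply] using this
  have hsymL : LinearMap.IsSymmetric A := Matrix.isHermitian_iff_isSymmetric.1 hsym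
  set c : Fin d → ℝ := fun i => b.repr y i with hc
  have hrepr : ∀ i, b.repr (A y) i = lam i * c i := by
    intro i
    rw [hc]
    simp only [OrthonormalBasis.repr_apply_apply]
    calc inner ℝ (b i) (A y) = inner ℝ (A (b i)) y := (hsymL (b i) y).symm
    _ = inner ℝ ((lam i : ℝ) • b i) y := by rw [hAb]
    _ = lam i * inner ℝ (b i) y := real_inner_smul_left _ _ _
  have hnormy : ‖y‖ ^ 2 = ∑ i, c i ^ 2 := by
    have h1 : ‖b.repr y‖ = ‖y‖ := b.repr.norm_map y
    rw [← h1, EuclideanSpace.norm_eq]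
    rw [Real.sq_sqrt (by positivity)]
    simp [hc, Real.norm_eq_abs, sq_abs]
  have hnormAy : ‖A y‖ ^ 2 = ∑ i, (lam i * c i) ^ 2 := by
    have h1 : ‖b.repr (A y)‖ = ‖A y‖ := b.repr.norm_map (A y)
    rw [← h1, EuclideanSpace.norm_eq]
    rw [Real.sq_sqrt (by positivity)]
    simp only [Real.norm_eq_abs, sq_abs]
    exact Finset.sum_congr rfl fun i _ => by rw [hrepr i]
  have hinner : inner ℝ y (A y) = ∑ i, lam i * c i ^ 2 := by
    have h1 : inner ℝ (b.repr y) (b.repr (A y)) = inner ℝ y (A y) :=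
      b.repr.inner_map_map y (A y)
    rw [← h1, PiLp.inner_apply]
    refine Finset.sum_congr rfl fun i _ => ?_
    rw [hrepr i]
    simp [RCLike.inner_apply, hc]
    ring
  have habs : |inner ℝ y (A y)| ≤ ∑ i, |lam i| * c i ^ 2 := by
    rw [hinner]
    refine le_trans (Finset.abs_sum_le_sum_abs _ _) ?_
    refine Finset.sum_le_sum fun i _ => ?_
    rw [abs_mul, abs_of_nonneg (sq_nonneg (c i))]
  refine ⟨?_, ?_, ?_⟩
  · have hsq : (m * ‖y‖) ^ 2 ≤ ‖A y‖ ^ 2 := by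
      rw [mul_pow, hnormy, hnormAy, Finset.mul_sum]
      refine Finset.sum_le_sum fun i _ => ?_
      rw [mul_pow]
      have : m ^ 2 ≤ lam i ^ 2 := by
        rw [← sq_abs (lam i)]
        exact pow_le_pow_left₀ hm0 (hm i) 2
      nlinarith [sq_nonneg (c i)]
    calc m * ‖y‖ = Real.sqrt ((m * ‖y‖) ^ 2) := (Real.sqrt_sq (by positivity)).symm
    _ ≤ Real.sqrt (‖A y‖ ^ 2) := Real.sqrt_le_sqrt hsq
    _ = ‖A y‖ := Real.sqrt_sq (norm_nonneg _)
  · calc m * |inner ℝ y (A y)| ≤ m * ∑ i, |lam i| * c i ^ 2 :=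
        mul_le_mul_of_nonneg_left habs hm0
    _ = ∑ i, (m * |lam i|) * c i ^ 2 := by rw [Finset.mul_sum]; ring_nf
    _ ≤ ∑ i, (lam i * c i) ^ 2 := by
        refine Finset.sum_le_sum fun i _ => ?_
        have h1 : m * |lam i| ≤ |lam i| * |lam i| :=
          mul_le_mul_of_nonneg_right (hm i) (abs_nonneg _)
        calc (m * |lam i|) * c i ^ 2 ≤ (|lam i| * |lam i|) * c i ^ 2 :=
            mul_le_mul_of_nonneg_right h1 (sq_nonneg _)
        _ = (lam i * c i) ^ 2 := by rw [abs_mul_abs_self]; ring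
    _ = ‖A y‖ ^ 2 := hnormAy.symm
  · calc |inner ℝ y (A y)| ≤ ∑ i, |lam i| * c i ^ 2 := habs
    _ ≤ ∑ i, M * c i ^ 2 :=
        Finset.sum_le_sum fun i _ => mul_le_mul_of_nonneg_right (hM i) (sq_nonneg _)
    _ = M * ‖y‖ ^ 2 := by rw [hnormy, Finset.mul_sum]
open InnerProductSpace

variable {d : ℕ} [NeZero d]
local notation "E" => EuclideanSpace ℝ (Fin d)

lemma grad_fderiv (f : E → ℝ) (hf : ContDiff ℝ 2 f) (z : E) :
    HasFDerivAt f (InnerProductSpace.toDual ℝ _ (gradient f z)) z :=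
  ((hf.differentiable (by norm_num)).differentiableAt.hasGradientAt).hasFDerivAt

lemma taylor2 (f : E → ℝ) (hf : ContDiff ℝ 2 f) (xstar : E)
    (A : E →L[ℝ] E) (hsymA : ∀ w h : E, inner ℝ w (A h) = inner ℝ (A w) h)
    {ε r₁ : ℝ} (hε : 0 ≤ ε)
    (hT1 : ∀ z : E, dist z xstar < r₁ →
      ‖gradient f z - A (z - xstar)‖ ≤ ε * ‖z - xstar‖)
    (p : E) (hp : dist p xstar < r₁) :
    |f p - f xstar - (1/2) * inner ℝ (p - xstar) (A (p - xstar))|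
      ≤ ε * ‖p - xstar‖ ^ 2 := by
  classical
  set φ : E → ℝ := fun z => f z - f xstar - (1/2) * inner ℝ (z - xstar) (A (z - xstar))
    with hφ
  set φ' : E → (E →L[ℝ] ℝ) := fun z => InnerProductSpace.toDual ℝ _
    (gradient f z - A (z - xstar)) with hφ'
  have hder : ∀ z : E, HasFDerivAt φ (φ' z) z := by
    intro z
    have hw : HasFDerivAt (fun w : E => w - xstar) (ContinuousLinearMap.id ℝ _) z :=
      (hasFDerivAt_id z).sub_const xstar
    have hAw : HasFDerivAt (fun w : E => A (w - xstar))
        (A.comp (ContinuousLinearMap.id ℝ _)) z := A.hasFDerivAt.comp z hw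
    have hQ := (hw.inner ℝ hAw).const_mul (1/2 : ℝ)
    have hfz := (grad_fderiv f hf z).sub_const (f xstar)
    have := hfz.sub hQ
    refine this.congr_fderiv (Eq.symm ?_)
    ext h
    simp only [hφ', ContinuousLinearMap.sub_apply, ContinuousLinearMap.smul_apply,
      fderivInnerCLM_apply, ContinuousLinearMap.comp_apply, ContinuousLinearMap.prod_apply,
      ContinuousLinearMap.id_apply, toDual_apply_apply, smul_eq_mul]
    rw [inner_sub_left]
    have h1 : inner ℝ (z - xstar) (A h) = inner ℝ (A (z - xstar)) h := hsymA _ _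
    have h2 : inner ℝ h (A (z - xstar)) = inner ℝ (A (z - xstar)) h := real_inner_comm _ _
    rw [h1, h2]
    ring
  set s := ‖p - xstar‖ with hs
  have hs0 : 0 ≤ s := norm_nonneg _
  have hball : Metric.closedBall xstar s ⊆ Metric.ball xstar r₁ := by
    intro z hz
    rw [Metric.mem_closedBall] at hz
    rw [Metric.mem_ball]
    calc dist z xstar ≤ s := hz
    _ = dist p xstar := by rw [hs, dist_eq_norm]
    _ < r₁ := hp
  have hbound : ∀ z ∈ Metric.closedBall xstar s, ‖φ' z‖ ≤ ε * s := by
    intro z hz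
    rw [hφ']
    rw [LinearIsometryEquiv.norm_map]
    have h1 := hT1 z (hball hz)
    refine le_trans h1 (mul_le_mul_of_nonneg_left ?_ hε)
    rw [← dist_eq_norm]
    exact Metric.mem_closedBall.1 hz
  have hmvt := (convex_closedBall xstar s).norm_image_sub_le_of_norm_hasFDerivWithin_le
    (fun z _ => (hder z).hasFDerivWithinAt) hbound
    (Metric.mem_closedBall_self hs0)
    (by rw [Metric.mem_closedBall, dist_eq_norm])
  have hφx : φ xstar = 0 := by simp [hφ]
  have : ‖φ p - φ xstar‖ ≤ ε * s * ‖p - xstar‖ := hmvt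
  rw [hφx, sub_zero] at this
  calc |f p - f xstar - (1/2) * inner ℝ (p - xstar) (A (p - xstar))| = ‖φ p‖ := rfl
  _ ≤ ε * s * ‖p - xstar‖ := this
  _ = ε * ‖p - xstar‖ ^ 2 := by rw [hs]; ring


/-- Saddle-point escape time: if `x*` is a non-degenerate critical point of a
`C²` function `f` with Hessian condition number `κ` and `C > 4`, then for all
sufficiently small `r > 0`, every solution of the normalized gradient flow on
`[0,T)` spends time at most `C√κ·r` in `B_r(x*) \ {x*}`. -/
theorem stmt_17 {d : ℕ} [NeZero d] (f : EuclideanSpace ℝ (Fin d) → ℝ)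
    (hf : ContDiff ℝ 2 f)
    (xstar : EuclideanSpace ℝ (Fin d)) (hcrit : gradient f xstar = 0)
    (H : Matrix (Fin d) (Fin d) ℝ) (hsym : H.IsHermitian) (hinv : IsUnit H)
    (hH : HasFDerivAt (gradient f)
      (Matrix.toEuclideanLin H).toContinuousLinearMap xstar)
    (κ : ℝ)
    (hκ : κ = (Finset.univ.sup' Finset.univ_nonempty fun i => |hsym.eigenvalues i|) /
              (Finset.univ.inf' Finset.univ_nonempty fun i => |hsym.eigenvalues i|))
    (C : ℝ) (hC : 4 < C) :
    ∃ r₀ > (0:ℝ), ∀ r : ℝ, 0 < r → r < r₀ →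
      ∀ (T : ℝ) (x : ℝ → EuclideanSpace ℝ (Fin d)),
        (∀ t ∈ Set.Ico (0:ℝ) T,
          HasDerivAt x (-(‖gradient f (x t)‖⁻¹ • gradient f (x t))) t) →
        (∀ t ∈ Set.Ico (0:ℝ) T, gradient f (x t) ≠ 0) →
        volume {t ∈ Set.Ico (0:ℝ) T | x t ∈ Metric.ball xstar r \ {xstar}} ≤
          ENNReal.ofReal (C * Real.sqrt κ * r) := by
  classical
  set M : ℝ := Finset.univ.sup' Finset.univ_nonempty fun i => |hsym.eigenvalues i| with hM
  set m : ℝ := Finset.univ.inf' Finset.univ_nonempty fun i => |hsym.eigenvalues i| with hm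
  have hmle : ∀ i, m ≤ |hsym.eigenvalues i| := by
    intro i
    rw [hm]
    exact Finset.inf'_le (fun j => |hsym.eigenvalues j|) (Finset.mem_univ i)
  have hMge : ∀ i, |hsym.eigenvalues i| ≤ M := by
    intro i
    rw [hM]
    exact Finset.le_sup' (fun j => |hsym.eigenvalues j|) (Finset.mem_univ i)
  have heig : ∀ i, hsym.eigenvalues i ≠ 0 := by
    have hdet : H.det ≠ 0 := (Matrix.isUnit_iff_isUnit_det H).1 hinv |>.ne_zero
    intro i hi
    apply hdet
    rw [hsym.det_eq_prod_eigenvalues]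
    exact Finset.prod_eq_zero (Finset.mem_univ i) (by simp [hi])
  have hm0 : 0 < m := by
    obtain ⟨i, _, hi⟩ := Finset.exists_mem_eq_inf' Finset.univ_nonempty
      (fun i => |hsym.eigenvalues i|)
    rw [hm, hi]
    exact abs_pos.2 (heig i)
  have hmM : m ≤ M := le_trans (hmle (Classical.arbitrary (Fin d)))
    (hMge (Classical.arbitrary (Fin d)))
  have hM0 : 0 < M := lt_of_lt_of_le hm0 hmM
  have hκval : κ = M / m := hκ
  have hκ0 : 0 < κ := hκval ▸ div_pos hM0 hm0
  -- choice of δ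
  set δ : ℝ := min (1/2) ((C^2 - 4)/(24 + 2*C^2)) with hδ
  have hC2 : (16:ℝ) < C^2 := by nlinarith
  have hδ0 : 0 < δ := by
    apply lt_min (by norm_num)
    apply div_pos (by nlinarith) (by nlinarith)
  have hδhalf : δ ≤ 1/2 := min_le_left _ _
  have hδC : δ * (24 + 2*C^2) ≤ C^2 - 4 := by
    have h1 : δ ≤ (C^2 - 4)/(24 + 2*C^2) := min_le_right _ _
    rw [le_div_iff₀ (by nlinarith)] at h1
    linarith
  have keyineq : 4 + 16*δ + 16*δ^2 ≤ C^2 * (1-δ)^2 := by nlinarith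
  set ε : ℝ := δ * m with hε
  have hε0 : 0 < ε := mul_pos hδ0 hm0
  -- Taylor radius from the little-o in hH
  have hlo := (Asymptotics.isLittleO_iff.mp hH.isLittleO) hε0
  rw [hcrit] at hlo
  rw [Metric.eventually_nhds_iff] at hlo
  obtain ⟨r₁, hr₁0, hT1⟩ := hlo
  refine ⟨r₁, hr₁0, ?_⟩
  intro r hr0 hrr₁ T x hx hgrad
  set A := (Matrix.toEuclideanLin H).toContinuousLinearMap with hA
  have hT1' : ∀ z : EuclideanSpace ℝ (Fin d), dist z xstar < r₁ →
      ‖gradient f z - A (z - xstar)‖ ≤ ε * ‖z - xstar‖ := by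
    intro z hz
    have := hT1 hz
    simpa [Real.norm_eq_abs, abs_of_nonneg (norm_nonneg _)] using this
  have hsymA : ∀ w h : EuclideanSpace ℝ (Fin d),
      inner ℝ w (A h) = inner ℝ (A w) h := by
    intro w h
    exact ((Matrix.isHermitian_iff_isSymmetric.1 hsym) w h).symm
  set B : ℝ := (1/2 + δ) * M * r^2 with hB
  have hBpos : 0 < B := by positivity
  set k : ℝ := (1-δ) * Real.sqrt (2*m/(1+2*δ)) with hk
  have h1δ : 0 < 1 - δ := by linarith
  have h12δ : 0 < 1 + 2*δ := by linarith
  have hkpos : 0 < k := by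
    apply mul_pos h1δ
    apply Real.sqrt_pos.2
    positivity
  -- pointwise estimates
  have hpt : ∀ z : EuclideanSpace ℝ (Fin d), dist z xstar < r → z ≠ xstar →
      |f z - f xstar| ≤ B ∧ k * Real.sqrt |f z - f xstar| ≤ ‖gradient f z‖ := by
    intro z hzr hzne
    set y := z - xstar with hy
    set ny := ‖y‖ with hny
    have hny0 : 0 ≤ ny := norm_nonneg _
    have hnyr : ny < r := by rwa [hny, hy, ← dist_eq_norm]
    have hzr₁ : dist z xstar < r₁ := lt_trans hzr hrr₁
    obtain ⟨s1, s2, s3⟩ := spectral_bounds H hsym hm0.le hmle hMge y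
    set na := ‖Matrix.toEuclideanLin H y‖ with hna
    rw [← hny] at s1 s3
    have hAy : A y = Matrix.toEuclideanLin H y := rfl
    have hT1z : ‖gradient f z - A y‖ ≤ ε * ny := hT1' z hzr₁
    have hT2z : |f z - f xstar - (1/2) * inner ℝ y (A y)| ≤ ε * ny^2 :=
      taylor2 f hf xstar A hsymA hε0.le hT1' z hzr₁
    rw [hAy] at hT1z hT2z
    set Q : ℝ := inner ℝ y (Matrix.toEuclideanLin H y) with hQ
    set u : ℝ := f z - f xstar with hu
    have hglb : (1-δ) * na ≤ ‖gradient f z‖ := by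
      have h1 : na - ‖gradient f z‖ ≤ ‖gradient f z - Matrix.toEuclideanLin H y‖ := by
        have := norm_sub_norm_le (gradient f z - Matrix.toEuclideanLin H y) (gradient f z)
        simp only [sub_sub_cancel_left, norm_neg] at this
        linarith [norm_sub_norm_le (Matrix.toEuclideanLin H y) (gradient f z),
          norm_sub_rev (gradient f z) (Matrix.toEuclideanLin H y)]
      have h2 : ε * ny ≤ δ * na := by
        rw [hε]
        calc δ * m * ny = δ * (m * ny) := by ring
        _ ≤ δ * na := mul_le_mul_of_nonneg_left s1 hδ0.le
      linarith [hT1z]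
    have hub1 : 2 * m * |u| ≤ (1 + 2*δ) * na^2 := by
      have hq1 : |u| ≤ ε * ny^2 + (1/2) * |Q| := by
        calc |u| = |(u - (1/2)*Q) + (1/2)*Q| := by rw [sub_add_cancel]
        _ ≤ |u - (1/2)*Q| + |(1/2)*Q| := abs_add_le _ _
        _ ≤ ε * ny^2 + (1/2) * |Q| := by
            have habs12 : |(1/2:ℝ)*Q| = (1/2)*|Q| := by
              rw [abs_mul]; norm_num
            rw [habs12]
            exact add_le_add_left hT2z _
      have hmny2 : m^2 * ny^2 ≤ na^2 := by
        have hmn0 : (0:ℝ) ≤ m * ny := mul_nonneg hm0.le hny0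
        have h := mul_le_mul s1 s1 hmn0 (le_trans hmn0 s1)
        calc m^2*ny^2 = (m*ny)*(m*ny) := by ring
        _ ≤ na*na := h
        _ = na^2 := by ring
      have hmQ : m * |Q| ≤ na^2 := s2
      have h2mε : 2*m*(ε*ny^2) ≤ 2*δ*na^2 := by
        rw [hε]
        calc 2*m*(δ*m*ny^2) = 2*δ*(m^2*ny^2) := by ring
        _ ≤ 2*δ*na^2 := by
            apply mul_le_mul_of_nonneg_left hmny2
            linarith
      calc 2*m*|u| ≤ 2*m*(ε*ny^2 + (1/2)*|Q|) := by
            apply mul_le_mul_of_nonneg_left hq1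
            linarith
      _ = 2*m*(ε*ny^2) + m*|Q| := by ring
      _ ≤ 2*δ*na^2 + na^2 := add_le_add h2mε hmQ
      _ = (1+2*δ)*na^2 := by ring
    constructor
    · -- |u| ≤ B
      have : |u| ≤ (1/2 + δ) * M * ny^2 := by
        have hq1 : |u| ≤ ε * ny^2 + (1/2) * |Q| := by
          calc |u| = |(u - (1/2)*Q) + (1/2)*Q| := by rw [sub_add_cancel]
          _ ≤ |u - (1/2)*Q| + |(1/2)*Q| := abs_add_le _ _
          _ ≤ ε * ny^2 + (1/2) * |Q| := by
              have habs12 : |(1/2:ℝ)*Q| = (1/2)*|Q| := by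
                rw [abs_mul]; norm_num
              rw [habs12]
              exact add_le_add_left hT2z _
        have hεM : ε ≤ δ * M := by rw [hε]; exact mul_le_mul_of_nonneg_left hmM hδ0.le
        have hny2 : (0:ℝ) ≤ ny^2 := sq_nonneg ny
        calc |u| ≤ ε * ny^2 + (1/2) * |Q| := hq1
        _ ≤ δ * M * ny^2 + (1/2) * (M * ny^2) :=
            add_le_add (mul_le_mul_of_nonneg_right hεM hny2)
              (mul_le_mul_of_nonneg_left s3 (by norm_num))
        _ = (1/2 + δ) * M * ny^2 := by ring
      refine le_trans this ?_
      rw [hB]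
      have hny2r : ny^2 ≤ r^2 := by nlinarith
      have : (0:ℝ) < (1/2 + δ) * M := by positivity
      exact mul_le_mul_of_nonneg_left hny2r this.le
    · -- gradient lower bound
      have h2m : (2*m/(1+2*δ)) * |u| ≤ na^2 := by
        rw [div_mul_eq_mul_div, div_le_iff₀ h12δ]
        calc 2*m*|u| ≤ (1+2*δ)*na^2 := hub1
        _ = na^2 * (1+2*δ) := by ring
      have hsq : Real.sqrt (2*m/(1+2*δ)) * Real.sqrt |u| ≤ na := by
        rw [← Real.sqrt_mul (by positivity)]
        calc Real.sqrt (2*m/(1+2*δ) * |u|) ≤ Real.sqrt (na^2) := Real.sqrt_le_sqrt h2m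
        _ = na := Real.sqrt_sq (norm_nonneg _)
      calc k * Real.sqrt |u| = (1-δ) * (Real.sqrt (2*m/(1+2*δ)) * Real.sqrt |u|) := by
            rw [hk]; ring
      _ ≤ (1-δ) * na := mul_le_mul_of_nonneg_left hsq h1δ.le
      _ ≤ ‖gradient f z‖ := hglb
  -- derivative of u along the trajectory
  set u : ℝ → ℝ := fun t => f (x t) - f xstar with hu
  set u' : ℝ → ℝ := fun t => -‖gradient f (x t)‖ with hu'
  have hud : ∀ t ∈ Set.Ico (0:ℝ) T, HasDerivAt u (u' t) t := by
    intro t ht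
    have hfd := grad_fderiv f hf (x t)
    have hcomp := hfd.comp_hasDerivAt t (hx t ht)
    have hval : (InnerProductSpace.toDual ℝ _ (gradient f (x t)))
        (-(‖gradient f (x t)‖⁻¹ • gradient f (x t))) = u' t := by
      rw [InnerProductSpace.toDual_apply_apply, inner_neg_right, real_inner_smul_right,
        real_inner_self_eq_norm_sq, hu']
      have hgne : ‖gradient f (x t)‖ ≠ 0 := norm_ne_zero_iff.2 (hgrad t ht)
      field_simp
    have := hcomp.sub_const (f xstar)
    rw [hval] at this
    exact this
  have hanti : StrictAntiOn u (Set.Ico 0 T) := by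
    apply strictAntiOn_of_deriv_neg (convex_Ico 0 T)
    · exact fun t ht => (hud t ht).continuousAt.continuousWithinAt
    · intro t ht
      rw [interior_Ico] at ht
      rw [(hud t (Set.Ioo_subset_Ico_self ht)).deriv]
      have : (0:ℝ) < ‖gradient f (x t)‖ :=
        norm_pos_iff.2 (hgrad t (Set.Ioo_subset_Ico_self ht))
      have h2 : u' t = -‖gradient f (x t)‖ := rfl
      rw [h2]
      linarith
  have hinjIco : Set.InjOn u (Set.Ico 0 T) := hanti.injOn
  -- the sets
  set Op := {t : ℝ | t ∈ Set.Ioo (0:ℝ) T ∧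
    x t ∈ Metric.ball xstar r \ {xstar} ∧ u t ∈ Set.Ioi (0:ℝ)} with hOp
  set Om := {t : ℝ | t ∈ Set.Ioo (0:ℝ) T ∧
    x t ∈ Metric.ball xstar r \ {xstar} ∧ u t ∈ Set.Iio (0:ℝ)} with hOm
  set Z := {t : ℝ | t ∈ Set.Ico (0:ℝ) T ∧ u t = 0} with hZ
  have hopen : ∀ V : Set ℝ, IsOpen V → IsOpen {t : ℝ | t ∈ Set.Ioo (0:ℝ) T ∧
      x t ∈ Metric.ball xstar r \ {xstar} ∧ u t ∈ V} := by
    intro V hV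
    rw [isOpen_iff_mem_nhds]
    rintro t ⟨ht1, ht2, ht3⟩
    have hcx : ContinuousAt x t := (hx t (Set.Ioo_subset_Ico_self ht1)).continuousAt
    have hcu : ContinuousAt u t := by
      have hcf : ContinuousAt f (x t) := hf.continuous.continuousAt
      exact (hcf.comp hcx).sub continuousAt_const
    filter_upwards [isOpen_Ioo.mem_nhds ht1,
      hcx.preimage_mem_nhds ((Metric.isOpen_ball.sdiff isClosed_singleton).mem_nhds ht2),
      hcu.preimage_mem_nhds (hV.mem_nhds ht3)] with τ h1 h2 h3
    exact ⟨h1, h2, h3⟩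
  have hOpopen : IsOpen Op := hopen _ isOpen_Ioi
  have hOmopen : IsOpen Om := hopen _ isOpen_Iio
  have hOpsub : Op ⊆ Set.Ico 0 T := fun t ht => Set.Ioo_subset_Ico_self ht.1
  have hOmsub : Om ⊆ Set.Ico 0 T := fun t ht => Set.Ioo_subset_Ico_self ht.1
  -- cover
  have hcover : {t ∈ Set.Ico (0:ℝ) T | x t ∈ Metric.ball xstar r \ {xstar}} ⊆
      ({0} : Set ℝ) ∪ (Op ∪ (Om ∪ Z)) := by
    rintro t ⟨ht, hball⟩
    rcases eq_or_lt_of_le ht.1 with h0 | h0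
    · exact Or.inl (by simp [← h0])
    rcases lt_trichotomy (u t) 0 with hneg | hzero | hpos
    · exact Or.inr (Or.inr (Or.inl ⟨⟨h0, ht.2⟩, hball, hneg⟩))
    · exact Or.inr (Or.inr (Or.inr ⟨ht, hzero⟩))
    · exact Or.inr (Or.inl ⟨⟨h0, ht.2⟩, hball, hpos⟩)
  have hZ0 : volume Z = 0 := by
    apply Set.Subsingleton.measure_zero
    intro a ha b hb
    exact hinjIco ha.1 hb.1 (ha.2.trans hb.2.symm)
  -- apply side bound to Op
  have hOpvol : volume Op ≤ ENNReal.ofReal (2 * Real.sqrt B / k) := by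
    apply side_bound hOpopen.measurableSet (fun t ht => hud t (hOpsub ht))
      (hinjIco.mono hOpsub) hkpos hBpos.le
    intro t ht
    obtain ⟨ht1, ht2, ht3⟩ := ht
    have hdist : dist (x t) xstar < r := Metric.mem_ball.1 ht2.1
    have hne : x t ≠ xstar := ht2.2
    obtain ⟨hb1, hb2⟩ := hpt (x t) hdist hne
    have hupos : 0 < u t := ht3
    have habs : |u t| = u t := abs_of_pos hupos
    refine ⟨hupos, ?_, ?_⟩
    · rw [← habs]; exact hb1
    · rw [hu']
      rw [abs_neg, abs_of_nonneg (norm_nonneg _), ← habs]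
      exact hb2
  -- apply side bound to Om
  have hOmvol : volume Om ≤ ENNReal.ofReal (2 * Real.sqrt B / k) := by
    apply side_bound (u := fun t => -(u t)) (u' := fun t => -(u' t))
      hOmopen.measurableSet
      (fun t ht => (hud t (hOmsub ht)).neg)
      (fun a ha b hb hab => hinjIco.mono hOmsub ha hb (neg_injective hab))
      hkpos hBpos.le
    intro t ht
    obtain ⟨ht1, ht2, ht3⟩ := ht
    have hdist : dist (x t) xstar < r := Metric.mem_ball.1 ht2.1
    have hne : x t ≠ xstar := ht2.2
    obtain ⟨hb1, hb2⟩ := hpt (x t) hdist hne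
    have huneg : u t < 0 := ht3
    have habs : |u t| = -(u t) := abs_of_neg huneg
    refine ⟨by linarith, ?_, ?_⟩
    · rw [← habs]; exact hb1
    · rw [hu']
      rw [neg_neg, abs_of_nonneg (norm_nonneg _), ← habs]
      exact hb2
  -- final numeric inequality
  have hfinal : 2 * Real.sqrt B / k + 2 * Real.sqrt B / k ≤ C * Real.sqrt κ * r := by
    set a := Real.sqrt ((1/2 + δ) * M) with ha
    set s := Real.sqrt κ with hsdef
    have hC0 : (0:ℝ) < C := by linarith
    have ha0 : 0 ≤ a := Real.sqrt_nonneg _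
    have hs0 : 0 ≤ s := Real.sqrt_nonneg _
    have hsqB : Real.sqrt B = a * r := by
      rw [hB, ha, Real.sqrt_mul (by positivity), Real.sqrt_sq hr0.le]
    have ha2 : a^2 = (1/2 + δ) * M := Real.sq_sqrt (by positivity)
    have hs2 : s^2 = M / m := by rw [hsdef, Real.sq_sqrt hκ0.le, hκval]
    have hk2 : k^2 = (1-δ)^2 * (2*m/(1+2*δ)) := by
      rw [hk, mul_pow, Real.sq_sqrt (by positivity)]
    have key2 : (4*a)^2 ≤ (C*(s*k))^2 := by
      have hlhs : (4*a)^2 = 16 * ((1/2 + δ) * M) := by rw [mul_pow, ha2]; ring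
      have hrhs : (C*(s*k))^2 = C^2 * ((M/m) * ((1-δ)^2 * (2*m/(1+2*δ)))) := by
        rw [mul_pow, mul_pow, hs2, hk2]
      rw [hlhs, hrhs]
      have hval : C^2 * ((M/m) * ((1-δ)^2 * (2*m/(1+2*δ)))) =
          2*C^2*M*(1-δ)^2/(1+2*δ) := by
        field_simp
      rw [hval, le_div_iff₀ h12δ]
      have h := mul_le_mul_of_nonneg_left keyineq (by positivity : (0:ℝ) ≤ 2*M)
      calc 16*((1/2+δ)*M)*(1+2*δ) = 2*M*(4+16*δ+16*δ^2) := by ring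
      _ ≤ 2*M*(C^2*(1-δ)^2) := h
      _ = 2*C^2*M*(1-δ)^2 := by ring
    have key1 : 4*a ≤ C*(s*k) := by
      have h1 : (0:ℝ) ≤ 4*a := by positivity
      have h2 : (0:ℝ) ≤ C*(s*k) := by positivity
      calc 4*a = Real.sqrt ((4*a)^2) := (Real.sqrt_sq h1).symm
      _ ≤ Real.sqrt ((C*(s*k))^2) := Real.sqrt_le_sqrt key2
      _ = C*(s*k) := Real.sqrt_sq h2
    have hsum : 2 * Real.sqrt B / k + 2 * Real.sqrt B / k = 4*(a*r)/k := by
      rw [hsqB]; ring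
    rw [hsum, div_le_iff₀ hkpos]
    calc 4*(a*r) = (4*a)*r := by ring
    _ ≤ (C*(s*k))*r := mul_le_mul_of_nonneg_right key1 hr0.le
    _ = C*s*r*k := by ring
  -- assemble
  calc volume {t ∈ Set.Ico (0:ℝ) T | x t ∈ Metric.ball xstar r \ {xstar}}
      ≤ volume (({0} : Set ℝ) ∪ (Op ∪ (Om ∪ Z))) := measure_mono hcover
  _ ≤ volume ({0} : Set ℝ) + volume (Op ∪ (Om ∪ Z)) := measure_union_le _ _
  _ ≤ volume ({0} : Set ℝ) + (volume Op + (volume Om + volume Z)) := by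
      gcongr
      refine le_trans (measure_union_le _ _) ?_
      gcongr
      exact measure_union_le _ _
  _ = volume Op + volume Om := by
      rw [hZ0, measure_singleton]
      simp
  _ ≤ ENNReal.ofReal (2 * Real.sqrt B / k) + ENNReal.ofReal (2 * Real.sqrt B / k) :=
      add_le_add hOpvol hOmvol
  _ = ENNReal.ofReal (2 * Real.sqrt B / k + 2 * Real.sqrt B / k) :=
      (ENNReal.ofReal_add (by positivity) (by positivity)).symm
  _ ≤ ENNReal.ofReal (C * Real.sqrt κ * r) := ENNReal.ofReal_le_ofReal hfinal
end
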